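/- Let i ∈ N be a buyer and ξ ∈ ℝ_{≥0}^{E_i}. Then ξ belongs to the clinching polytope P^i_{w,d} (i.e., P^i_{w,d}(ξ) = P^i_{w,d}(0)) if and only if for every F ⊆ E_i and every X ⊆ N−i it holds that ξ(F) ≤ f_{w,d}(E_X ∪ F) − f_{w,d}(E_X). -/
import Mathlib


open Finset

noncomputable section

namespace TwoSidedMarket

variable {B S : Type*} [Fintype B] [Fintype S] [DecidableEq B] [DecidableEq S]

/-- A function `f` on subsets of a ground set `G` is monotone submodular:
`f ∅ = 0`, monotone on subsets of `G`, and submodular on subsets of `G`. -/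
def IsMonoSubmodular {α : Type*} [DecidableEq α] (G : Finset α) (f : Finset α → ℝ) : Prop :=
  f ∅ = 0 ∧ (∀ A B : Finset α, A ⊆ B → B ⊆ G → f A ≤ f B) ∧
    ∀ A B : Finset α, A ⊆ G → B ⊆ G → f (A ∩ B) + f (A ∪ B) ≤ f A + f B

/-- Monotone submodular, without the requirement of vanishing at `∅`. -/
def IsMonoSubmodularWeak {α : Type*} [DecidableEq α] (G : Finset α) (f : Finset α → ℝ) : Prop :=
  (∀ A B : Finset α, A ⊆ B → B ⊆ G → f A ≤ f B) ∧
    ∀ A B : Finset α, A ⊆ G → B ⊆ G → f (A ∩ B) + f (A ∪ B) ≤ f A + f B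

/-- `E_i`: the edges of `E` incident to buyer `i`. -/
def Ei (E : Finset (B × S)) (i : B) : Finset (B × S) := E.filter fun e => e.1 = i

/-- `E_j`: the edges of `E` incident to seller `j`. -/
def Ej (E : Finset (B × S)) (j : S) : Finset (B × S) := E.filter fun e => e.2 = j

/-- `E_X`: the edges of `E` incident to some buyer in `X`. -/
def EX (E : Finset (B × S)) (X : Finset B) : Finset (B × S) := E.filter fun e => e.1 ∈ X

/-- `N_F`: the buyers incident to some edge of `F`. -/
def NF (F : Finset (B × S)) : Finset B := F.image Prod.fst

/-- `x(F) = Σ_{e ∈ F} x e`. -/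
def vsum (x : B × S → ℝ) (F : Finset (B × S)) : ℝ := ∑ e ∈ F, x e

/-- Membership `w ∈ P = ⊕_j P_j`: `w` is nonnegative, supported on `E`, and
`w|_{E_j} ∈ P_j` for every seller `j`. -/
def memP (E : Finset (B × S)) (fj : S → Finset (B × S) → ℝ) (w : B × S → ℝ) : Prop :=
  (∀ e, 0 ≤ w e) ∧ (∀ e ∉ E, w e = 0) ∧ ∀ j : S, ∀ F ⊆ Ej E j, vsum w F ≤ fj j F

/-- `f(F) := Σ_{j ∈ M} f_j (E_j ∩ F)`. -/
def fTot (E : Finset (B × S)) (fj : S → Finset (B × S) → ℝ) (F : Finset (B × S)) : ℝ :=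
  ∑ j : S, fj j (Ej E j ∩ F)

/-- `f_w(F) := min_{F ⊆ F' ⊆ E} (f(F') - w(F'))`. -/
def fw (E : Finset (B × S)) (fj : S → Finset (B × S) → ℝ)
    (w : B × S → ℝ) (F : Finset (B × S)) : ℝ :=
  sInf {r : ℝ | ∃ F' : Finset (B × S), F ⊆ F' ∧ F' ⊆ E ∧ r = fTot E fj F' - vsum w F'}

/-- Membership in the remnant supply polytope `P_{w,d}`. -/
def memPwd (E : Finset (B × S)) (fj : S → Finset (B × S) → ℝ)
    (w : B × S → ℝ) (d : B → ℝ) (x : B × S → ℝ) : Prop :=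
  (∀ e, 0 ≤ x e) ∧ (∀ e ∉ E, x e = 0) ∧ memP E fj (w + x) ∧
    ∀ i : B, vsum x (Ei E i) ≤ d i

/-- `f_{w,d}(F) := max_{x ∈ P_{w,d}} x(F)`. -/
def fwd (E : Finset (B × S)) (fj : S → Finset (B × S) → ℝ)
    (w : B × S → ℝ) (d : B → ℝ) (F : Finset (B × S)) : ℝ :=
  sSup {r : ℝ | ∃ x : B × S → ℝ, memPwd E fj w d x ∧ r = vsum x F}

/-- `P^i_{w,d}(ξ)`: the remnant supply polytope of the buyers other than `i`,
given that buyer `i` receives `ξ`.  (Vectors indexed by `N - i` are encoded as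
functions on all of `B` vanishing at `i`.) -/
def PiWd (E : Finset (B × S)) (fj : S → Finset (B × S) → ℝ)
    (w : B × S → ℝ) (d : B → ℝ) (i : B) (ξ : B × S → ℝ) : Set (B → ℝ) :=
  {u | u i = 0 ∧ (∀ k, 0 ≤ u k) ∧
    ∃ x : B × S → ℝ, memPwd E fj w d x ∧ (∀ e ∈ Ei E i, x e = ξ e) ∧
      ∀ k : B, k ≠ i → vsum x (Ei E k) = u k}

/-- The clinching polytope `P^i_{w,d}` of buyer `i`:
all `ξ ∈ ℝ_{≥0}^{E_i}` with `P^i_{w,d}(ξ) = P^i_{w,d}(0)`. -/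
def ClinchP (E : Finset (B × S)) (fj : S → Finset (B × S) → ℝ)
    (w : B × S → ℝ) (d : B → ℝ) (i : B) : Set (B × S → ℝ) :=
  {ξ | (∀ e, 0 ≤ ξ e) ∧ (∀ e ∉ Ei E i, ξ e = 0) ∧
    PiWd E fj w d i ξ = PiWd E fj w d i 0}


set_option linter.unusedSectionVars false

/- ---------- basic vsum lemmas ---------- -/

lemma vsum_nonneg {x : B × S → ℝ} (h : ∀ e, 0 ≤ x e) (F : Finset (B × S)) : 0 ≤ vsum x F :=
  Finset.sum_nonneg fun e _ => h e

lemma vsum_mono {x : B × S → ℝ} (h : ∀ e, 0 ≤ x e) {F G : Finset (B × S)} (hFG : F ⊆ G) :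
    vsum x F ≤ vsum x G :=
  Finset.sum_le_sum_of_subset_of_nonneg hFG fun e _ _ => h e

lemma vsum_union_inter (x : B × S → ℝ) (A C : Finset (B × S)) :
    vsum x (A ∪ C) + vsum x (A ∩ C) = vsum x A + vsum x C :=
  Finset.sum_union_inter

lemma vsum_add (x y : B × S → ℝ) (F : Finset (B × S)) :
    vsum (x + y) F = vsum x F + vsum y F := by
  simp [vsum, Finset.sum_add_distrib]

lemma vsum_sdiff {A F : Finset (B × S)} (h : A ⊆ F) (x : B × S → ℝ) :
    vsum x (F \ A) + vsum x A = vsum x F :=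
  Finset.sum_sdiff h

lemma vsum_le_vsum {x y : B × S → ℝ} (h : ∀ e, x e ≤ y e) (F : Finset (B × S)) :
    vsum x F ≤ vsum y F :=
  Finset.sum_le_sum fun e _ => h e

/- ---------- edge set lemmas ---------- -/

lemma Ei_subset (E : Finset (B × S)) (i : B) : Ei E i ⊆ E := Finset.filter_subset _ _
lemma Ej_subset (E : Finset (B × S)) (j : S) : Ej E j ⊆ E := Finset.filter_subset _ _
lemma EX_subset (E : Finset (B × S)) (X : Finset B) : EX E X ⊆ E := Finset.filter_subset _ _

lemma mem_Ei {E : Finset (B × S)} {i : B} {e : B × S} : e ∈ Ei E i ↔ e ∈ E ∧ e.1 = i := by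
  simp [Ei]

lemma mem_EX {E : Finset (B × S)} {X : Finset B} {e : B × S} : e ∈ EX E X ↔ e ∈ E ∧ e.1 ∈ X := by
  simp [EX]

lemma Ei_inter_of_subset {E F : Finset (B × S)} (hF : F ⊆ E) (k : B) :
    Ei E k ∩ F = F.filter fun e => e.1 = k := by
  ext e; simp only [Finset.mem_inter, mem_Ei, Finset.mem_filter]
  exact ⟨fun h => ⟨h.2, h.1.2⟩, fun h => ⟨⟨hF h.1, h.2⟩, h.1⟩⟩

lemma Ej_inter_of_subset {E F : Finset (B × S)} (hF : F ⊆ E) (j : S) :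
    Ej E j ∩ F = F.filter fun e => e.2 = j := by
  ext e; simp only [Finset.mem_inter, Ej, Finset.mem_filter]
  exact ⟨fun h => ⟨h.2, h.1.2⟩, fun h => ⟨⟨hF h.1, h.2⟩, h.1⟩⟩

lemma seller_decomp (E : Finset (B × S)) (y : B × S → ℝ) {F : Finset (B × S)} (hF : F ⊆ E) :
    vsum y F = ∑ j : S, vsum y (Ej E j ∩ F) := by
  have := Finset.sum_fiberwise F (fun e => e.2) y
  rw [vsum, ← this]
  exact Finset.sum_congr rfl fun j _ => by rw [Ej_inter_of_subset hF j]; rfl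

lemma buyer_decomp (E : Finset (B × S)) (y : B × S → ℝ) {F : Finset (B × S)} (hF : F ⊆ E) :
    vsum y F = ∑ k : B, vsum y (Ei E k ∩ F) := by
  have := Finset.sum_fiberwise F (fun e => e.1) y
  rw [vsum, ← this]
  exact Finset.sum_congr rfl fun k _ => by rw [Ei_inter_of_subset hF k]; rfl

lemma Ei_inter_self (E : Finset (B × S)) (k : B) : Ei E k ∩ E = Ei E k :=
  Finset.inter_eq_left.2 (Ei_subset E k)

lemma buyer_decomp_E (E : Finset (B × S)) (y : B × S → ℝ) :
    vsum y E = ∑ k : B, vsum y (Ei E k) := by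
  rw [buyer_decomp E y (Finset.Subset.refl E)]
  exact Finset.sum_congr rfl fun k _ => by rw [Ei_inter_self]

lemma EX_biUnion (E : Finset (B × S)) (X : Finset B) :
    EX E X = X.biUnion fun k => Ei E k := by
  ext e
  simp only [mem_EX, Finset.mem_biUnion, mem_Ei]
  constructor
  · rintro ⟨he, hx⟩; exact ⟨e.1, hx, he, rfl⟩
  · rintro ⟨k, hk, he, rfl⟩; exact ⟨he, hk⟩

lemma vsum_EX (E : Finset (B × S)) (x : B × S → ℝ) (X : Finset B) :
    vsum x (EX E X) = ∑ k ∈ X, vsum x (Ei E k) := by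
  rw [EX_biUnion, vsum, Finset.sum_biUnion]
  · rfl
  · intro a _ b _ hab
    simp only [Finset.disjoint_left, mem_Ei]
    rintro e ⟨_, rfl⟩ ⟨_, h⟩
    exact hab h


/- ---------- fTot lemmas ---------- -/

lemma fTot_empty {E : Finset (B × S)} {fj : S → Finset (B × S) → ℝ}
    (hfj : ∀ j : S, IsMonoSubmodular (Ej E j) (fj j)) : fTot E fj ∅ = 0 := by
  unfold fTot
  rw [Finset.sum_eq_zero]
  intro j _
  rw [Finset.inter_empty]
  exact (hfj j).1

lemma fTot_mono {E : Finset (B × S)} {fj : S → Finset (B × S) → ℝ}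
    (hfj : ∀ j : S, IsMonoSubmodular (Ej E j) (fj j)) {A C : Finset (B × S)}
    (hAC : A ⊆ C) : fTot E fj A ≤ fTot E fj C := by
  apply Finset.sum_le_sum
  intro j _
  exact (hfj j).2.1 _ _ (Finset.inter_subset_inter (Finset.Subset.refl _) hAC)
    Finset.inter_subset_left

lemma fTot_submod {E : Finset (B × S)} {fj : S → Finset (B × S) → ℝ}
    (hfj : ∀ j : S, IsMonoSubmodular (Ej E j) (fj j)) (A C : Finset (B × S)) :
    fTot E fj (A ∩ C) + fTot E fj (A ∪ C) ≤ fTot E fj A + fTot E fj C := by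
  unfold fTot
  rw [← Finset.sum_add_distrib, ← Finset.sum_add_distrib]
  apply Finset.sum_le_sum
  intro j _
  have h := (hfj j).2.2 (Ej E j ∩ A) (Ej E j ∩ C) Finset.inter_subset_left
    Finset.inter_subset_left
  have h1 : Ej E j ∩ A ∩ (Ej E j ∩ C) = Ej E j ∩ (A ∩ C) := by
    ext e; simp only [Finset.mem_inter]; tauto
  have h2 : Ej E j ∩ A ∪ Ej E j ∩ C = Ej E j ∩ (A ∪ C) := by
    ext e; simp only [Finset.mem_inter, Finset.mem_union]; tauto
  rw [h1, h2] at h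
  linarith

lemma fTot_on_Ej {E : Finset (B × S)} {fj : S → Finset (B × S) → ℝ}
    (hfj : ∀ j : S, IsMonoSubmodular (Ej E j) (fj j)) {j : S} {F : Finset (B × S)}
    (hF : F ⊆ Ej E j) : fTot E fj F = fj j F := by
  unfold fTot
  rw [Finset.sum_eq_single j]
  · rw [Finset.inter_eq_right.2 hF]
  · intro j' _ hj'
    have : Ej E j' ∩ F = ∅ := by
      ext e
      simp only [Finset.mem_inter, Ej, Finset.mem_filter, Finset.notMem_empty, iff_false]
      rintro ⟨⟨_, h2⟩, hF'⟩
      have := (Finset.mem_filter.1 (hF hF')).2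
      exact hj' (h2 ▸ this ▸ rfl)
    rw [this]
    exact (hfj j').1
  · intro h; exact absurd (Finset.mem_univ j) h

lemma memP_sum_le {E : Finset (B × S)} {fj : S → Finset (B × S) → ℝ} {y : B × S → ℝ}
    (hy : memP E fj y) {F : Finset (B × S)} (hF : F ⊆ E) : vsum y F ≤ fTot E fj F := by
  rw [seller_decomp E y hF]
  apply Finset.sum_le_sum
  intro j _
  exact hy.2.2 j _ Finset.inter_subset_left

/- ---------- fw lemmas ---------- -/

lemma fwSet_finite (E : Finset (B × S)) (fj : S → Finset (B × S) → ℝ) (w : B × S → ℝ)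
    (F : Finset (B × S)) :
    {r : ℝ | ∃ F' : Finset (B × S), F ⊆ F' ∧ F' ⊆ E ∧ r = fTot E fj F' - vsum w F'}.Finite := by
  apply (Set.finite_range fun F' : Finset (B × S) => fTot E fj F' - vsum w F').subset
  rintro r ⟨F', _, _, rfl⟩
  exact ⟨F', rfl⟩

lemma fwSet_nonempty {E F : Finset (B × S)} (fj : S → Finset (B × S) → ℝ) (w : B × S → ℝ)
    (hF : F ⊆ E) :
    {r : ℝ | ∃ F' : Finset (B × S), F ⊆ F' ∧ F' ⊆ E ∧ r = fTot E fj F' - vsum w F'}.Nonempty :=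
  ⟨_, F, Finset.Subset.refl F, hF, rfl⟩

lemma fw_le_of {E : Finset (B × S)} (fj : S → Finset (B × S) → ℝ) (w : B × S → ℝ)
    {F F' : Finset (B × S)} (h1 : F ⊆ F') (h2 : F' ⊆ E) :
    fw E fj w F ≤ fTot E fj F' - vsum w F' :=
  csInf_le (fwSet_finite E fj w F).bddBelow ⟨F', h1, h2, rfl⟩

lemma le_fw {E F : Finset (B × S)} {fj : S → Finset (B × S) → ℝ} {w : B × S → ℝ} {c : ℝ}
    (hF : F ⊆ E)
    (h : ∀ F', F ⊆ F' → F' ⊆ E → c ≤ fTot E fj F' - vsum w F') : c ≤ fw E fj w F := by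
  apply le_csInf (fwSet_nonempty fj w hF)
  rintro r ⟨F', h1, h2, rfl⟩
  exact h F' h1 h2

lemma fw_exists_min {E F : Finset (B × S)} (fj : S → Finset (B × S) → ℝ) (w : B × S → ℝ)
    (hF : F ⊆ E) :
    ∃ F', F ⊆ F' ∧ F' ⊆ E ∧ fw E fj w F = fTot E fj F' - vsum w F' :=
  (fwSet_nonempty fj w hF).csInf_mem (fwSet_finite E fj w F)

lemma fw_nonneg {E : Finset (B × S)} {fj : S → Finset (B × S) → ℝ} {w : B × S → ℝ}
    (hfj : ∀ j : S, IsMonoSubmodular (Ej E j) (fj j)) (hw : memP E fj w)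
    {F : Finset (B × S)} (hF : F ⊆ E) : 0 ≤ fw E fj w F := by
  apply le_fw hF
  intro F' _ h2
  have := memP_sum_le hw h2
  linarith

lemma fw_empty {E : Finset (B × S)} {fj : S → Finset (B × S) → ℝ} {w : B × S → ℝ}
    (hfj : ∀ j : S, IsMonoSubmodular (Ej E j) (fj j)) (hw : memP E fj w) :
    fw E fj w ∅ = 0 := by
  have h1 : fw E fj w ∅ ≤ 0 := by
    have := fw_le_of (E := E) fj w (Finset.empty_subset ∅) (Finset.empty_subset E)
    simpa [fTot_empty hfj, vsum] using this
  exact le_antisymm h1 (fw_nonneg hfj hw (Finset.empty_subset E))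

lemma fw_mono {E : Finset (B × S)} {fj : S → Finset (B × S) → ℝ} {w : B × S → ℝ}
    {F G : Finset (B × S)} (hFG : F ⊆ G) (hG : G ⊆ E) :
    fw E fj w F ≤ fw E fj w G := by
  obtain ⟨G', h1, h2, h3⟩ := fw_exists_min fj w hG
  rw [h3]
  exact fw_le_of fj w (hFG.trans h1) h2

lemma fw_submod {E : Finset (B × S)} {fj : S → Finset (B × S) → ℝ} {w : B × S → ℝ}
    (hfj : ∀ j : S, IsMonoSubmodular (Ej E j) (fj j))
    {A C : Finset (B × S)} (hA : A ⊆ E) (hC : C ⊆ E) :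
    fw E fj w (A ∩ C) + fw E fj w (A ∪ C) ≤ fw E fj w A + fw E fj w C := by
  obtain ⟨A', hA1, hA2, hA3⟩ := fw_exists_min fj w hA
  obtain ⟨C', hC1, hC2, hC3⟩ := fw_exists_min fj w hC
  have h1 : fw E fj w (A ∩ C) ≤ fTot E fj (A' ∩ C') - vsum w (A' ∩ C') :=
    fw_le_of fj w (Finset.inter_subset_inter hA1 hC1) (Finset.inter_subset_left.trans hA2)
  have h2 : fw E fj w (A ∪ C) ≤ fTot E fj (A' ∪ C') - vsum w (A' ∪ C') :=
    fw_le_of fj w (Finset.union_subset_union hA1 hC1) (Finset.union_subset hA2 hC2)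
  have h3 := fTot_submod hfj A' C'
  have h4 := vsum_union_inter w A' C'
  rw [hA3, hC3]
  linarith

lemma vsum_le_fw {E : Finset (B × S)} {fj : S → Finset (B × S) → ℝ} {w x : B × S → ℝ}
    (hP : memP E fj (w + x)) (hx : ∀ e, 0 ≤ x e) {F : Finset (B × S)} (hF : F ⊆ E) :
    vsum x F ≤ fw E fj w F := by
  apply le_fw hF
  intro F' h1 h2
  have h3 : vsum x F ≤ vsum x F' := vsum_mono hx h1
  have h4 := memP_sum_le hP h2
  rw [vsum_add] at h4
  linarith


lemma memP_of_le_fw {E : Finset (B × S)} {fj : S → Finset (B × S) → ℝ} {w x : B × S → ℝ}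
    (hfj : ∀ j : S, IsMonoSubmodular (Ej E j) (fj j)) (hw : memP E fj w)
    (hx0 : ∀ e, 0 ≤ x e) (hxs : ∀ e ∉ E, x e = 0)
    (hfw : ∀ F ⊆ E, vsum x F ≤ fw E fj w F) : memP E fj (w + x) := by
  refine ⟨fun e => add_nonneg (hw.1 e) (hx0 e), fun e he => by
    simp [hw.2.1 e he, hxs e he], ?_⟩
  intro j F hF
  have hFE : F ⊆ E := hF.trans (Ej_subset E j)
  have h1 : vsum x F ≤ fw E fj w F := hfw F hFE
  have h2 : fw E fj w F ≤ fTot E fj F - vsum w F := fw_le_of fj w (Finset.Subset.refl F) hFE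
  rw [vsum_add, ← fTot_on_Ej hfj hF]
  linarith

/- ---------- fwd lemmas ---------- -/

lemma memPwd_zero {E : Finset (B × S)} {fj : S → Finset (B × S) → ℝ} {w : B × S → ℝ}
    {d : B → ℝ} (hw : memP E fj w) (hd : ∀ k, 0 ≤ d k) : memPwd E fj w d 0 := by
  refine ⟨fun e => le_refl 0, fun e _ => rfl, by simpa using hw, ?_⟩
  intro k
  simpa [vsum] using hd k

lemma fwdSet_nonempty {E : Finset (B × S)} {fj : S → Finset (B × S) → ℝ} {w : B × S → ℝ}
    {d : B → ℝ} (hw : memP E fj w) (hd : ∀ k, 0 ≤ d k) (F : Finset (B × S)) :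
    {r : ℝ | ∃ x : B × S → ℝ, memPwd E fj w d x ∧ r = vsum x F}.Nonempty :=
  ⟨_, 0, memPwd_zero hw hd, rfl⟩

lemma fwdSet_bddAbove {E : Finset (B × S)} {fj : S → Finset (B × S) → ℝ} {w : B × S → ℝ}
    {d : B → ℝ} {F : Finset (B × S)} (hF : F ⊆ E) :
    BddAbove {r : ℝ | ∃ x : B × S → ℝ, memPwd E fj w d x ∧ r = vsum x F} := by
  refine ⟨fw E fj w F, ?_⟩
  rintro r ⟨x, hx, rfl⟩
  exact vsum_le_fw hx.2.2.1 hx.1 hF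

lemma le_fwd {E : Finset (B × S)} {fj : S → Finset (B × S) → ℝ} {w x : B × S → ℝ}
    {d : B → ℝ} (hx : memPwd E fj w d x) {F : Finset (B × S)} (hF : F ⊆ E) :
    vsum x F ≤ fwd E fj w d F :=
  le_csSup (fwdSet_bddAbove hF) ⟨x, hx, rfl⟩

lemma fwd_le {E : Finset (B × S)} {fj : S → Finset (B × S) → ℝ} {w : B × S → ℝ}
    {d : B → ℝ} (hw : memP E fj w) (hd : ∀ k, 0 ≤ d k) {F : Finset (B × S)} {c : ℝ}
    (h : ∀ x, memPwd E fj w d x → vsum x F ≤ c) : fwd E fj w d F ≤ c := by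
  apply csSup_le (fwdSet_nonempty hw hd F)
  rintro r ⟨x, hx, rfl⟩
  exact h x hx

lemma fwd_le_fw {E : Finset (B × S)} {fj : S → Finset (B × S) → ℝ} {w : B × S → ℝ}
    {d : B → ℝ} (hw : memP E fj w) (hd : ∀ k, 0 ≤ d k) {F : Finset (B × S)} (hF : F ⊆ E) :
    fwd E fj w d F ≤ fw E fj w F :=
  fwd_le hw hd fun x hx => vsum_le_fw hx.2.2.1 hx.1 hF

lemma fwd_empty {E : Finset (B × S)} {fj : S → Finset (B × S) → ℝ} {w : B × S → ℝ}
    {d : B → ℝ} (hw : memP E fj w) (hd : ∀ k, 0 ≤ d k) : fwd E fj w d ∅ = 0 := by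
  apply le_antisymm
  · exact fwd_le hw hd fun x _ => by simp [vsum]
  · have := le_fwd (memPwd_zero hw hd) (Finset.empty_subset E)
    simpa [vsum] using this

/- ---------- maximizer existence (generic) ---------- -/

section Generic

variable {α : Type*} [DecidableEq α]

lemma exists_maxOn' [Fintype α] (K : Set (α → ℝ)) (hne : K.Nonempty) (hcl : IsClosed K) (C : ℝ)
    (hbd : ∀ x ∈ K, ∀ e, x e ∈ Set.Icc (0 : ℝ) C) (G : Finset α) :
    ∃ x ∈ K, ∀ y ∈ K, ∑ a ∈ G, y a ≤ ∑ a ∈ G, x a := by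
  have hsub : K ⊆ Set.pi Set.univ fun _ : α => Set.Icc (0 : ℝ) C := by
    intro x hx e _
    exact hbd x hx e
  have hcomp : IsCompact K :=
    (isCompact_univ_pi fun _ => isCompact_Icc).of_isClosed_subset hcl hsub
  have hcont : ContinuousOn (fun x : α → ℝ => ∑ a ∈ G, x a) K :=
    (continuous_finset_sum G fun e _ => continuous_apply e).continuousOn
  obtain ⟨x, hxK, hmax⟩ := hcomp.exists_isMaxOn hne hcont
  exact ⟨x, hxK, fun y hy => hmax hy⟩

/- ---------- conv : contraction-truncation of a submodular function ---------- -/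

variable {ι : Type*} [DecidableEq ι]

/-- `conv f T A y F = min_{S ⊆ T} (f (F ∪ ⋃_{t ∈ S} A t) - y(S))`. -/
def conv (f : Finset α → ℝ) (T : Finset ι) (A : ι → Finset α) (y : ι → ℝ)
    (F : Finset α) : ℝ :=
  sInf {r : ℝ | ∃ S, S ⊆ T ∧ r = f (F ∪ S.biUnion A) - ∑ t ∈ S, y t}

variable {f : Finset α → ℝ} {T : Finset ι} {A : ι → Finset α} {y : ι → ℝ} {E : Finset α}

lemma convSet_finite (F : Finset α) :
    {r : ℝ | ∃ S, S ⊆ T ∧ r = f (F ∪ S.biUnion A) - ∑ t ∈ S, y t}.Finite := by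
  apply Set.Finite.subset
    ((T.powerset.finite_toSet).image fun S => f (F ∪ S.biUnion A) - ∑ t ∈ S, y t)
  rintro r ⟨S, hS, rfl⟩
  exact ⟨S, by simpa using hS, rfl⟩

lemma convSet_nonempty (F : Finset α) :
    {r : ℝ | ∃ S, S ⊆ T ∧ r = f (F ∪ S.biUnion A) - ∑ t ∈ S, y t}.Nonempty :=
  ⟨_, ∅, Finset.empty_subset T, rfl⟩

lemma conv_le_of {F : Finset α} {S : Finset ι} (hS : S ⊆ T) :
    conv f T A y F ≤ f (F ∪ S.biUnion A) - ∑ t ∈ S, y t :=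
  csInf_le (convSet_finite F).bddBelow ⟨S, hS, rfl⟩

lemma le_conv {F : Finset α} {c : ℝ}
    (h : ∀ S ⊆ T, c ≤ f (F ∪ S.biUnion A) - ∑ t ∈ S, y t) : c ≤ conv f T A y F := by
  apply le_csInf (convSet_nonempty F)
  rintro r ⟨S, hS, rfl⟩
  exact h S hS

lemma conv_exists_min (F : Finset α) :
    ∃ S ⊆ T, conv f T A y F = f (F ∪ S.biUnion A) - ∑ t ∈ S, y t := by
  obtain ⟨S, h1, h2⟩ := (convSet_nonempty (f := f) (T := T) (A := A) (y := y) F).csInf_mem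
    (convSet_finite F)
  exact ⟨S, h1, h2⟩

lemma conv_le_self (F : Finset α) (hf0 : f ∅ = 0) : conv f T A y F ≤ f F := by
  have := conv_le_of (f := f) (A := A) (y := y) (F := F) (Finset.empty_subset T)
  simpa using this

lemma biUnion_subset_of (hA : ∀ t ∈ T, A t ⊆ E) {S : Finset ι} (hS : S ⊆ T) :
    S.biUnion A ⊆ E := by
  intro a ha
  obtain ⟨t, ht, hat⟩ := Finset.mem_biUnion.1 ha
  exact hA t (hS ht) hat

lemma conv_mono (hf : IsMonoSubmodular E f) (hA : ∀ t ∈ T, A t ⊆ E)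
    {F G : Finset α} (hFG : F ⊆ G) (hG : G ⊆ E) :
    conv f T A y F ≤ conv f T A y G := by
  obtain ⟨S, hS, hmin⟩ := conv_exists_min (f := f) (T := T) (A := A) (y := y) G
  rw [hmin]
  have h1 : conv f T A y F ≤ f (F ∪ S.biUnion A) - ∑ t ∈ S, y t := conv_le_of hS
  have h2 : f (F ∪ S.biUnion A) ≤ f (G ∪ S.biUnion A) :=
    hf.2.1 _ _ (Finset.union_subset_union hFG (Finset.Subset.refl _))
      (Finset.union_subset hG (biUnion_subset_of hA hS))
  linarith

lemma conv_submod (hf : IsMonoSubmodular E f) (hA : ∀ t ∈ T, A t ⊆ E)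
    {F G : Finset α} (hF : F ⊆ E) (hG : G ⊆ E) :
    conv f T A y (F ∩ G) + conv f T A y (F ∪ G) ≤ conv f T A y F + conv f T A y G := by
  obtain ⟨SF, hSF, hF3⟩ := conv_exists_min (f := f) (T := T) (A := A) (y := y) F
  obtain ⟨SG, hSG, hG3⟩ := conv_exists_min (f := f) (T := T) (A := A) (y := y) G
  set U := F ∪ SF.biUnion A with hU
  set V := G ∪ SG.biUnion A with hV
  have hUE : U ⊆ E := Finset.union_subset hF (biUnion_subset_of hA hSF)
  have hVE : V ⊆ E := Finset.union_subset hG (biUnion_subset_of hA hSG)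
  have h1 : conv f T A y (F ∩ G) ≤
      f ((F ∩ G) ∪ (SF ∩ SG).biUnion A) - ∑ t ∈ SF ∩ SG, y t :=
    conv_le_of (Finset.inter_subset_left.trans hSF)
  have h2 : conv f T A y (F ∪ G) ≤
      f ((F ∪ G) ∪ (SF ∪ SG).biUnion A) - ∑ t ∈ SF ∪ SG, y t :=
    conv_le_of (Finset.union_subset hSF hSG)
  have hsum : (∑ t ∈ SF ∪ SG, y t) + ∑ t ∈ SF ∩ SG, y t =
      (∑ t ∈ SF, y t) + ∑ t ∈ SG, y t := Finset.sum_union_inter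
  have hsub1 : (F ∩ G) ∪ (SF ∩ SG).biUnion A ⊆ U ∩ V := by
    intro a ha
    rcases Finset.mem_union.1 ha with h | h
    · exact Finset.mem_inter.2 ⟨Finset.mem_union_left _ (Finset.mem_inter.1 h).1,
        Finset.mem_union_left _ (Finset.mem_inter.1 h).2⟩
    · obtain ⟨t, ht, hat⟩ := Finset.mem_biUnion.1 h
      have htm := Finset.mem_inter.1 ht
      exact Finset.mem_inter.2 ⟨Finset.mem_union_right _ (Finset.mem_biUnion.2 ⟨t, htm.1, hat⟩),
        Finset.mem_union_right _ (Finset.mem_biUnion.2 ⟨t, htm.2, hat⟩)⟩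
  have hsub2 : (F ∪ G) ∪ (SF ∪ SG).biUnion A = U ∪ V := by
    ext a
    simp only [hU, hV, Finset.mem_union, Finset.mem_biUnion]
    constructor
    · rintro ((h | h) | ⟨t, (ht | ht), hat⟩)
      · exact Or.inl (Or.inl h)
      · exact Or.inr (Or.inl h)
      · exact Or.inl (Or.inr ⟨t, ht, hat⟩)
      · exact Or.inr (Or.inr ⟨t, ht, hat⟩)
    · rintro ((h | ⟨t, ht, hat⟩) | (h | ⟨t, ht, hat⟩))
      · exact Or.inl (Or.inl h)
      · exact Or.inr ⟨t, Or.inl ht, hat⟩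
      · exact Or.inl (Or.inr h)
      · exact Or.inr ⟨t, Or.inr ht, hat⟩
  have h3 : f ((F ∩ G) ∪ (SF ∩ SG).biUnion A) ≤ f (U ∩ V) :=
    hf.2.1 _ _ hsub1 (Finset.inter_subset_left.trans hUE)
  have h4 : f (U ∩ V) + f (U ∪ V) ≤ f U + f V := hf.2.2 U V hUE hVE
  rw [hF3, hG3]
  rw [hsub2] at h2
  linarith

lemma conv_nonneg (hf : IsMonoSubmodular E f) (hA : ∀ t ∈ T, A t ⊆ E)
    (hcut : ∀ S ⊆ T, ∑ t ∈ S, y t ≤ f (S.biUnion A)) {F : Finset α} (hF : F ⊆ E) :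
    0 ≤ conv f T A y F := by
  apply le_conv
  intro S hS
  have h1 : f (S.biUnion A) ≤ f (F ∪ S.biUnion A) :=
    hf.2.1 _ _ Finset.subset_union_right (Finset.union_subset hF (biUnion_subset_of hA hS))
  have h2 := hcut S hS
  linarith

lemma conv_empty (hf : IsMonoSubmodular E f) (hA : ∀ t ∈ T, A t ⊆ E)
    (hcut : ∀ S ⊆ T, ∑ t ∈ S, y t ≤ f (S.biUnion A)) :
    conv f T A y ∅ = 0 :=
  le_antisymm (by simpa [hf.1] using conv_le_self (f := f) (T := T) (A := A) (y := y) ∅ hf.1)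
    (conv_nonneg hf hA hcut (Finset.empty_subset E))

lemma conv_isMonoSubmodular (hf : IsMonoSubmodular E f) (hA : ∀ t ∈ T, A t ⊆ E)
    (hcut : ∀ S ⊆ T, ∑ t ∈ S, y t ≤ f (S.biUnion A)) {G' : Finset α} (hG' : G' ⊆ E) :
    IsMonoSubmodular G' (conv f T A y) :=
  ⟨conv_empty hf hA hcut,
   fun _ _ hAB hBE => conv_mono hf hA hAB (hBE.trans hG'),
   fun _ _ hAE hBE => conv_submod hf hA (hAE.trans hG') (hBE.trans hG')⟩


/- ---------- single polymatroid: achievable total ---------- -/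

lemma polymax [Fintype α] {Γ : Finset α} {h : Finset α → ℝ}
    (hh : IsMonoSubmodular Γ h) {c : ℝ} (hc0 : 0 ≤ c) (hcΓ : c ≤ h Γ) :
    ∃ x : α → ℝ, (∀ a, 0 ≤ x a) ∧ (∀ a ∉ Γ, x a = 0) ∧
      (∀ G ⊆ Γ, ∑ a ∈ G, x a ≤ h G) ∧ ∑ a ∈ Γ, x a = c := by
  classical
  have hpos : ∀ G ⊆ Γ, (0 : ℝ) ≤ h G := fun G hG => by
    have := hh.2.1 ∅ G (Finset.empty_subset G) hG
    rw [hh.1] at this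
    exact this
  set K : Set (α → ℝ) :=
    {x | (∀ a, 0 ≤ x a) ∧ (∀ a ∉ Γ, x a = 0) ∧ ∀ G ⊆ Γ, ∑ a ∈ G, x a ≤ h G} with hK
  have hne : K.Nonempty := ⟨0, fun _ => le_refl 0, fun _ _ => rfl,
    fun G hG => by simpa using hpos G hG⟩
  have hcl : IsClosed K := by
    have : K = (⋂ a : α, {x : α → ℝ | 0 ≤ x a}) ∩
        ((⋂ a ∈ {a : α | a ∉ Γ}, {x : α → ℝ | x a = 0}) ∩
          ⋂ G ∈ {G : Finset α | G ⊆ Γ}, {x : α → ℝ | ∑ a ∈ G, x a ≤ h G}) := by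
      ext x
      simp only [hK, Set.mem_inter_iff, Set.mem_iInter, Set.mem_setOf_eq]
    rw [this]
    refine (isClosed_iInter fun a => isClosed_le continuous_const (continuous_apply a)).inter
      (IsClosed.inter ?_ ?_)
    · exact isClosed_biInter fun a _ => isClosed_eq (continuous_apply a) continuous_const
    · exact isClosed_biInter fun G _ =>
        isClosed_le (continuous_finset_sum _ fun e _ => continuous_apply e) continuous_const
  set C : ℝ := ∑ a ∈ Γ, max (h {a}) 0 with hC
  have hC0 : 0 ≤ C := Finset.sum_nonneg fun a _ => le_max_right _ _
  have hbd : ∀ x ∈ K, ∀ a, x a ∈ Set.Icc (0 : ℝ) C := by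
    intro x hx a
    refine ⟨hx.1 a, ?_⟩
    by_cases haΓ : a ∈ Γ
    · have h1 : x a ≤ h {a} := by
        have := hx.2.2 {a} (Finset.singleton_subset_iff.2 haΓ)
        simpa using this
      have h2 : max (h {a}) 0 ≤ C :=
        Finset.single_le_sum (fun b _ => le_max_right (h {b}) 0) haΓ
      exact h1.trans ((le_max_left _ _).trans h2)
    · rw [hx.2.1 a haΓ]; exact hC0
  obtain ⟨x, hxK, hmax⟩ := exists_maxOn' K hne hcl C hbd Γ
  -- the maximal point has total h Γ
  set p : Finset α → Prop := fun G => G ⊆ Γ ∧ ∑ a ∈ G, x a = h G with hp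
  set Tight : Finset (Finset α) := Γ.powerset.filter fun G => ∑ a ∈ G, x a = h G with hTight
  set T : Finset α := Tight.sup id with hT
  have hpT : p T := by
    apply Finset.sup_induction
    · exact ⟨Finset.empty_subset Γ, by simpa using hh.1.symm⟩
    · rintro G1 ⟨hG1, he1⟩ G2 ⟨hG2, he2⟩
      rw [Finset.sup_eq_union]
      refine ⟨Finset.union_subset hG1 hG2, ?_⟩
      have s1 : ∑ a ∈ G1 ∪ G2, x a ≤ h (G1 ∪ G2) := hxK.2.2 _ (Finset.union_subset hG1 hG2)
      have s2 : ∑ a ∈ G1 ∩ G2, x a ≤ h (G1 ∩ G2) :=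
        hxK.2.2 _ (Finset.inter_subset_left.trans hG1)
      have s3 : h (G1 ∩ G2) + h (G1 ∪ G2) ≤ h G1 + h G2 := hh.2.2 G1 G2 hG1 hG2
      have s4 : (∑ a ∈ G1 ∪ G2, x a) + ∑ a ∈ G1 ∩ G2, x a =
          (∑ a ∈ G1, x a) + ∑ a ∈ G2, x a := Finset.sum_union_inter
      linarith
    · intro G hG
      have := Finset.mem_filter.1 hG
      exact ⟨Finset.mem_powerset.1 this.1, this.2⟩
  have hTΓ : T = Γ := by
    apply Finset.Subset.antisymm hpT.1
    intro a haΓ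
    by_contra haT
    -- every set containing a is slack; we can increase x at a
    have hslack : ∀ G ⊆ Γ, a ∈ G → ∑ b ∈ G, x b < h G := by
      intro G hG haG
      rcases lt_or_eq_of_le (hxK.2.2 G hG) with hlt | heq
      · exact hlt
      · exfalso
        apply haT
        have hGT : G ⊆ T := Finset.le_sup (f := id)
          (Finset.mem_filter.2 ⟨Finset.mem_powerset.2 hG, heq⟩)
        exact hGT haG
    set Gs : Finset (Finset α) := Γ.powerset.filter fun G => a ∈ G with hGs
    have hGsne : Gs.Nonempty := ⟨Γ, Finset.mem_filter.2 ⟨Finset.mem_powerset.2 le_rfl, haΓ⟩⟩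
    set ε : ℝ := Gs.inf' hGsne fun G => h G - ∑ b ∈ G, x b with hε
    have hε0 : 0 < ε := by
      rw [hε, Finset.lt_inf'_iff]
      intro G hG
      have := Finset.mem_filter.1 hG
      have := hslack G (Finset.mem_powerset.1 this.1) this.2
      linarith
    set x' : α → ℝ := fun b => x b + if b = a then ε else 0 with hx'
    have hsum' : ∀ G : Finset α, ∑ b ∈ G, x' b =
        (∑ b ∈ G, x b) + if a ∈ G then ε else 0 := by
      intro G
      rw [hx']
      rw [Finset.sum_add_distrib, Finset.sum_ite_eq' G a fun _ => ε]
    have hx'K : x' ∈ K := by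
      refine ⟨?_, ?_, ?_⟩
      · intro b
        rw [hx']
        dsimp only
        split
        · have := hxK.1 b; linarith
        · simpa using hxK.1 b
      · intro b hb
        rw [hx']
        dsimp only
        rw [if_neg (fun hba : b = a => hb (by rw [hba]; exact haΓ)), hxK.2.1 b hb, add_zero]
      · intro G hG
        rw [hsum' G]
        by_cases haG : a ∈ G
        · rw [if_pos haG]
          have h1 : ε ≤ h G - ∑ b ∈ G, x b := by
            rw [hε]
            exact Finset.inf'_le _ (Finset.mem_filter.2 ⟨Finset.mem_powerset.2 hG, haG⟩)
          linarith
        · rw [if_neg haG, add_zero]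
          exact hxK.2.2 G hG
    have := hmax x' hx'K
    rw [hsum' Γ, if_pos haΓ] at this
    linarith
  have htotal : ∑ a ∈ Γ, x a = h Γ := by
    have := hpT.2
    rw [hTΓ] at this
    exact this
  -- scale down to total exactly c
  by_cases hz : h Γ = 0
  · refine ⟨0, fun _ => le_refl 0, fun _ _ => rfl,
      fun G hG => by simpa using hpos G hG, ?_⟩
    have : c = 0 := le_antisymm (hcΓ.trans (le_of_eq hz)) hc0
    simpa using this.symm
  · have hΓpos : 0 < h Γ := lt_of_le_of_ne (hpos Γ le_rfl) (Ne.symm hz)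
    set lam : ℝ := c / h Γ with hlam
    have hlam0 : 0 ≤ lam := div_nonneg hc0 (le_of_lt hΓpos)
    have hlam1 : lam ≤ 1 := (div_le_one hΓpos).2 hcΓ
    refine ⟨fun a => lam * x a, fun a => mul_nonneg hlam0 (hxK.1 a),
      fun a ha => by show lam * x a = 0; rw [hxK.2.1 a ha, mul_zero], ?_, ?_⟩
    · intro G hG
      show ∑ a ∈ G, lam * x a ≤ h G
      rw [← Finset.mul_sum]
      have h1 : (0 : ℝ) ≤ ∑ a ∈ G, x a := Finset.sum_nonneg fun a _ => hxK.1 a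
      calc lam * ∑ a ∈ G, x a ≤ 1 * ∑ a ∈ G, x a := by
            apply mul_le_mul_of_nonneg_right hlam1 h1
        _ = ∑ a ∈ G, x a := one_mul _
        _ ≤ h G := hxK.2.2 G hG
    · show ∑ a ∈ Γ, lam * x a = c
      rw [← Finset.mul_sum, htotal, hlam, div_mul_cancel₀ _ hz]


/- ---------- the aggregation / splitting theorem ---------- -/

theorem agg [Fintype α] (A : ι → Finset α) (y : ι → ℝ) (T : Finset ι) :
    ∀ (E : Finset α) (f : Finset α → ℝ), IsMonoSubmodular E f →
    (∀ t ∈ T, 0 ≤ y t) →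
    (∀ t ∈ T, A t ⊆ E) →
    (∀ t₁ ∈ T, ∀ t₂ ∈ T, t₁ ≠ t₂ → Disjoint (A t₁) (A t₂)) →
    (∀ S ⊆ T, ∑ t ∈ S, y t ≤ f (S.biUnion A)) →
    ∃ x : α → ℝ, (∀ a, 0 ≤ x a) ∧ (∀ a ∉ T.biUnion A, x a = 0) ∧
      (∀ F ⊆ E, ∑ a ∈ F, x a ≤ f F) ∧ ∀ t ∈ T, ∑ a ∈ A t, x a = y t := by
  induction T using Finset.cons_induction with
  | empty =>
    intro E f hf _ _ _ _
    refine ⟨0, fun _ => le_refl 0, fun _ _ => rfl, fun F hF => ?_, fun t ht => absurd ht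
      (Finset.notMem_empty t)⟩
    have := hf.2.1 ∅ F (Finset.empty_subset F) hF
    rw [hf.1] at this
    simpa using this
  | cons t₀ T' ht₀ IH =>
    intro E f hf hy0 hA hdisj hcut
    -- set-up
    have hT'sub : ∀ S ⊆ T', S ⊆ Finset.cons t₀ T' ht₀ :=
      fun S hS => hS.trans (Finset.subset_cons ht₀)
    have hycut' : ∀ S ⊆ T', ∑ t ∈ S, y t ≤ f (S.biUnion A) :=
      fun S hS => hcut S (hT'sub S hS)
    have hA' : ∀ t ∈ T', A t ⊆ E := fun t ht => hA t (Finset.mem_cons_of_mem ht)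
    set Γ : Finset α := A t₀ with hΓ
    have hΓE : Γ ⊆ E := hA t₀ (Finset.mem_cons_self t₀ T')
    -- the bounding function for the allocation on the part `A t₀`
    set hfun : Finset α → ℝ := conv f T' A y with hhfun
    have hmsub : IsMonoSubmodular Γ hfun := conv_isMonoSubmodular hf hA' hycut' hΓE
    have hcΓ : y t₀ ≤ hfun Γ := by
      apply le_conv
      intro S hS
      have h1 : insert t₀ S ⊆ Finset.cons t₀ T' ht₀ := by
        rw [Finset.cons_eq_insert]
        exact Finset.insert_subset_insert t₀ hS
      have h2 := hcut (insert t₀ S) h1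
      have ht₀S : t₀ ∉ S := fun hc => ht₀ (hS hc)
      rw [Finset.sum_insert ht₀S, Finset.biUnion_insert] at h2
      have h3 : A t₀ ∪ S.biUnion A = Γ ∪ S.biUnion A := by rw [hΓ]
      rw [h3] at h2
      linarith
    obtain ⟨x₀, hx₀0, hx₀s, hx₀cap, hx₀tot⟩ :=
      polymax hmsub (hy0 t₀ (Finset.mem_cons_self t₀ T')) hcΓ
    -- contract f by x₀ on Γ; the new ground set is E \ Γ
    set f' : Finset α → ℝ := conv f Γ (fun a => {a}) x₀ with hf'
    have hsingle : ∀ S : Finset α, S.biUnion (fun a => ({a} : Finset α)) = S :=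
      fun S => Finset.biUnion_singleton_eq_self
    have hx₀f : ∀ S ⊆ Γ, ∑ a ∈ S, x₀ a ≤ f (S.biUnion fun a => ({a} : Finset α)) := by
      intro S hS
      rw [hsingle S]
      calc ∑ a ∈ S, x₀ a ≤ hfun S := hx₀cap S hS
        _ ≤ f S := conv_le_self S hf.1
    have hAΓ : ∀ a ∈ Γ, ({a} : Finset α) ⊆ E :=
      fun a ha => Finset.singleton_subset_iff.2 (hΓE ha)
    have hf'msub : IsMonoSubmodular (E \ Γ) f' :=
      conv_isMonoSubmodular hf hAΓ hx₀f Finset.sdiff_subset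
    -- hypotheses for the inductive step
    have hA'' : ∀ t ∈ T', A t ⊆ E \ Γ := by
      intro t ht
      rw [Finset.subset_sdiff]
      exact ⟨hA' t ht, hdisj t (Finset.mem_cons_of_mem ht) t₀ (Finset.mem_cons_self t₀ T')
        (fun hc => ht₀ (hc ▸ ht))⟩
    have hdisj' : ∀ t₁ ∈ T', ∀ t₂ ∈ T', t₁ ≠ t₂ → Disjoint (A t₁) (A t₂) :=
      fun t₁ h₁ t₂ h₂ h12 => hdisj t₁ (Finset.mem_cons_of_mem h₁) t₂
        (Finset.mem_cons_of_mem h₂) h12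
    have hcut' : ∀ S ⊆ T', ∑ t ∈ S, y t ≤ f' (S.biUnion A) := by
      intro S hS
      apply le_conv
      intro G hG
      rw [hsingle G]
      have h1 : ∑ a ∈ G, x₀ a ≤ hfun G := hx₀cap G hG
      have h2 : hfun G ≤ f (G ∪ S.biUnion A) - ∑ t ∈ S, y t := conv_le_of hS
      have h3 : G ∪ S.biUnion A = S.biUnion A ∪ G := Finset.union_comm _ _
      rw [h3] at h2
      linarith
    obtain ⟨x₁, hx₁0, hx₁s, hx₁cap, hx₁tot⟩ := IH (E \ Γ) f' hf'msub
      (fun t ht => hy0 t (Finset.mem_cons_of_mem ht)) hA'' hdisj' hcut'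
    -- combine
    have hx₁Γ : ∀ a ∈ Γ, x₁ a = 0 := by
      intro a ha
      apply hx₁s
      intro hc
      obtain ⟨t, ht, hat⟩ := Finset.mem_biUnion.1 hc
      exact (Finset.mem_sdiff.1 (hA'' t ht hat)).2 ha
    refine ⟨x₀ + x₁, fun a => add_nonneg (hx₀0 a) (hx₁0 a), ?_, ?_, ?_⟩
    · intro a ha
      have h1 : a ∉ Γ := fun hc => ha (Finset.mem_biUnion.2 ⟨t₀,
        Finset.mem_cons_self t₀ T', hc⟩)
      have h2 : a ∉ T'.biUnion A := by
        intro hc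
        obtain ⟨t, ht, hat⟩ := Finset.mem_biUnion.1 hc
        exact ha (Finset.mem_biUnion.2 ⟨t, Finset.mem_cons_of_mem ht, hat⟩)
      show x₀ a + x₁ a = 0
      rw [hx₀s a h1, hx₁s a h2, add_zero]
    · intro F hF
      have hsplit : ∑ a ∈ F, (x₀ + x₁) a = (∑ a ∈ F, x₀ a) + ∑ a ∈ F, x₁ a := by
        simp [Finset.sum_add_distrib]
      have e₀ : ∑ a ∈ F ∩ Γ, x₀ a = ∑ a ∈ F, x₀ a := by
        apply Finset.sum_subset Finset.inter_subset_left
        intro a haF hanot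
        exact hx₀s a fun hc => hanot (Finset.mem_inter.2 ⟨haF, hc⟩)
      have e₁ : ∑ a ∈ F \ Γ, x₁ a = ∑ a ∈ F, x₁ a := by
        apply Finset.sum_subset Finset.sdiff_subset
        intro a haF hanot
        have haΓ : a ∈ Γ := by
          by_contra hc
          exact hanot (Finset.mem_sdiff.2 ⟨haF, hc⟩)
        exact hx₁Γ a haΓ
      have c₁ : ∑ a ∈ F \ Γ, x₁ a ≤ f' (F \ Γ) :=
        hx₁cap (F \ Γ) (Finset.sdiff_subset_sdiff hF (Finset.Subset.refl Γ))
      have c₂ : f' (F \ Γ) ≤ f ((F \ Γ) ∪ (F ∩ Γ)) - ∑ a ∈ F ∩ Γ, x₀ a := by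
        have := conv_le_of (f := f) (T := Γ) (A := fun a => ({a} : Finset α)) (y := x₀)
          (F := F \ Γ) (S := F ∩ Γ) Finset.inter_subset_right
        rw [hsingle (F ∩ Γ)] at this
        exact this
      have c₃ : (F \ Γ) ∪ (F ∩ Γ) = F := by
        ext a
        simp only [Finset.mem_union, Finset.mem_sdiff, Finset.mem_inter]
        tauto
      rw [hsplit, ← e₀, ← e₁]
      rw [c₃] at c₂
      linarith
    · intro t ht
      rcases Finset.mem_cons.1 ht with rfl | ht'
      · have z₁ : ∑ a ∈ A t, x₁ a = 0 := Finset.sum_eq_zero fun a ha => hx₁Γ a ha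
        have : ∑ a ∈ A t, (x₀ + x₁) a = (∑ a ∈ A t, x₀ a) + ∑ a ∈ A t, x₁ a := by
          simp [Finset.sum_add_distrib]
        rw [this, z₁, add_zero]
        exact hx₀tot
      · have z₀ : ∑ a ∈ A t, x₀ a = 0 := by
          apply Finset.sum_eq_zero
          intro a ha
          exact hx₀s a fun hc => (Finset.mem_sdiff.1 (hA'' t ht' ha)).2 hc
        have : ∑ a ∈ A t, (x₀ + x₁) a = (∑ a ∈ A t, x₀ a) + ∑ a ∈ A t, x₁ a := by
          simp [Finset.sum_add_distrib]
        rw [this, z₀, zero_add]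
        exact hx₁tot t ht'

end Generic


/- ---------- the key existence lemma ---------- -/

lemma Ei_disjoint {E : Finset (B × S)} {k k' : B} (h : k ≠ k') :
    Disjoint (Ei E k) (Ei E k') := by
  rw [Finset.disjoint_left]
  rintro e he he'
  exact h ((mem_Ei.1 he).2 ▸ (mem_Ei.1 he').2 ▸ rfl)

lemma fw_isMonoSubmodular {E : Finset (B × S)} {fj : S → Finset (B × S) → ℝ} {w : B × S → ℝ}
    (hfj : ∀ j : S, IsMonoSubmodular (Ej E j) (fj j)) (hw : memP E fj w) :
    IsMonoSubmodular E (fw E fj w) :=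
  ⟨fw_empty hfj hw, fun _ _ hAB hBE => fw_mono hAB hBE, fun _ _ hA hB => fw_submod hfj hA hB⟩

lemma key_exists (E : Finset (B × S)) (fj : S → Finset (B × S) → ℝ)
    (hfj : ∀ j : S, IsMonoSubmodular (Ej E j) (fj j))
    (w : B × S → ℝ) (hw : memP E fj w) (d : B → ℝ)
    (i : B) (ξ : B × S → ℝ) (hξ0 : ∀ e, 0 ≤ ξ e)
    (u : B → ℝ) (hu0 : ∀ k, 0 ≤ u k)
    (hud : ∀ k, k ≠ i → u k ≤ d k)
    (hξd : vsum ξ (Ei E i) ≤ d i)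
    (hcut : ∀ D ⊆ Ei E i, ∀ Y ⊆ Finset.univ.erase i,
      vsum ξ D + ∑ k ∈ Y, u k ≤ fw E fj w (EX E Y ∪ D)) :
    ∃ x : B × S → ℝ, memPwd E fj w d x ∧ (∀ e ∈ Ei E i, x e = ξ e) ∧
      ∀ k, k ≠ i → vsum x (Ei E k) = u k := by
  classical
  set A : (B × S) ⊕ B → Finset (B × S) :=
    Sum.elim (fun e => ({e} : Finset (B × S))) (fun k => Ei E k) with hA
  set y : (B × S) ⊕ B → ℝ := Sum.elim ξ u with hy
  set T : Finset ((B × S) ⊕ B) :=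
    (Ei E i).map ⟨Sum.inl, Sum.inl_injective⟩ ∪
      (Finset.univ.erase i).map ⟨Sum.inr, Sum.inr_injective⟩ with hT
  have hmemT : ∀ t, t ∈ T ↔ (∃ e ∈ Ei E i, t = Sum.inl e) ∨
      ∃ k ∈ Finset.univ.erase i, t = Sum.inr k := by
    intro t
    simp only [hT, Finset.mem_union, Finset.mem_map, Function.Embedding.coeFn_mk]
    constructor
    · rintro (⟨e, he, rfl⟩ | ⟨k, hk, rfl⟩)
      · exact Or.inl ⟨e, he, rfl⟩
      · exact Or.inr ⟨k, hk, rfl⟩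
    · rintro (⟨e, he, rfl⟩ | ⟨k, hk, rfl⟩)
      · exact Or.inl ⟨e, he, rfl⟩
      · exact Or.inr ⟨k, hk, rfl⟩
  have hy0T : ∀ t ∈ T, 0 ≤ y t := by
    intro t _
    rcases t with e | k
    · exact hξ0 e
    · exact hu0 k
  have hAE : ∀ t ∈ T, A t ⊆ E := by
    intro t ht
    rcases (hmemT t).1 ht with ⟨e, he, rfl⟩ | ⟨k, _, rfl⟩
    · exact Finset.singleton_subset_iff.2 ((Ei_subset E i) he)
    · exact Ei_subset E k
  have hdisjT : ∀ t₁ ∈ T, ∀ t₂ ∈ T, t₁ ≠ t₂ → Disjoint (A t₁) (A t₂) := by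
    intro t₁ h₁ t₂ h₂ h12
    rcases (hmemT t₁).1 h₁ with ⟨e, he, rfl⟩ | ⟨k, hk, rfl⟩ <;>
      rcases (hmemT t₂).1 h₂ with ⟨e', he', rfl⟩ | ⟨k', hk', rfl⟩
    · have : e ≠ e' := fun hc => h12 (by rw [hc])
      simp only [hA, Sum.elim_inl, Finset.disjoint_singleton_left, Finset.mem_singleton]
      exact fun hc => this hc
    · have hei : e.1 = i := (mem_Ei.1 he).2
      have hki : k' ≠ i := Finset.ne_of_mem_erase hk'
      simp only [hA, Sum.elim_inl, Sum.elim_inr, Finset.disjoint_singleton_left]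
      intro hc
      exact hki ((mem_Ei.1 hc).2 ▸ hei ▸ rfl)
    · have hei : e'.1 = i := (mem_Ei.1 he').2
      have hki : k ≠ i := Finset.ne_of_mem_erase hk
      simp only [hA, Sum.elim_inl, Sum.elim_inr, Finset.disjoint_singleton_right]
      intro hc
      exact hki ((mem_Ei.1 hc).2 ▸ hei ▸ rfl)
    · have : k ≠ k' := fun hc => h12 (by rw [hc])
      simpa [hA] using Ei_disjoint (E := E) this
  have hcutT : ∀ Sset ⊆ T, ∑ t ∈ Sset, y t ≤ fw E fj w (Sset.biUnion A) := by
    intro Sset hSset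
    set D : Finset (B × S) := (Ei E i).filter fun e => Sum.inl e ∈ Sset with hD
    set Y : Finset B := (Finset.univ.erase i).filter fun k => Sum.inr k ∈ Sset with hY
    have hDi : D ⊆ Ei E i := Finset.filter_subset _ _
    have hYi : Y ⊆ Finset.univ.erase i := Finset.filter_subset _ _
    have hSeq : Sset = D.map ⟨Sum.inl, Sum.inl_injective⟩ ∪
        Y.map ⟨Sum.inr, Sum.inr_injective⟩ := by
      ext t
      simp only [Finset.mem_union, Finset.mem_map, Function.Embedding.coeFn_mk, hD, hY,
        Finset.mem_filter]
      constructor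
      · intro htS
        rcases (hmemT t).1 (hSset htS) with ⟨e, he, rfl⟩ | ⟨k, hk, rfl⟩
        · exact Or.inl ⟨e, ⟨he, htS⟩, rfl⟩
        · exact Or.inr ⟨k, ⟨hk, htS⟩, rfl⟩
      · rintro (⟨e, ⟨_, he2⟩, rfl⟩ | ⟨k, ⟨_, hk2⟩, rfl⟩)
        · exact he2
        · exact hk2
    have hdisjDY : Disjoint (D.map ⟨Sum.inl, Sum.inl_injective⟩)
        (Y.map (⟨Sum.inr, Sum.inr_injective⟩ : B ↪ (B × S) ⊕ B)) := by
      rw [Finset.disjoint_left]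
      rintro t ht ht'
      obtain ⟨e, _, rfl⟩ := Finset.mem_map.1 ht
      obtain ⟨k, _, hk⟩ := Finset.mem_map.1 ht'
      exact Sum.inl_ne_inr hk.symm
    have hsum : ∑ t ∈ Sset, y t = vsum ξ D + ∑ k ∈ Y, u k := by
      rw [hSeq, Finset.sum_union hdisjDY, Finset.sum_map, Finset.sum_map]
      rfl
    have hbiU : Sset.biUnion A = D ∪ EX E Y := by
      ext e'
      simp only [Finset.mem_biUnion, Finset.mem_union, mem_EX]
      constructor
      · rintro ⟨t, htS, he'⟩
        rcases (hmemT t).1 (hSset htS) with ⟨e, he, rfl⟩ | ⟨k, hk, rfl⟩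
        · simp only [hA, Sum.elim_inl, Finset.mem_singleton] at he'
          exact Or.inl (by rw [he']; exact Finset.mem_filter.2 ⟨he, htS⟩)
        · simp only [hA, Sum.elim_inr] at he'
          refine Or.inr ⟨(Ei_subset E k) he', ?_⟩
          rw [(mem_Ei.1 he').2]
          exact Finset.mem_filter.2 ⟨hk, htS⟩
      · rintro (h | ⟨he'E, he'Y⟩)
        · refine ⟨Sum.inl e', (Finset.mem_filter.1 h).2, ?_⟩
          simp [hA]
        · refine ⟨Sum.inr e'.1, (Finset.mem_filter.1 he'Y).2, ?_⟩
          simp only [hA, Sum.elim_inr]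
          exact mem_Ei.2 ⟨he'E, rfl⟩
    rw [hsum, hbiU, Finset.union_comm D (EX E Y)]
    exact hcut D hDi Y hYi
  obtain ⟨x, hx0, hxs, hxcap, hxtot⟩ := agg A y T E (fw E fj w)
    (fw_isMonoSubmodular hfj hw) hy0T hAE hdisjT hcutT
  have hxE : ∀ e ∉ E, x e = 0 := by
    intro e he
    apply hxs
    intro hc
    obtain ⟨t, ht, hat⟩ := Finset.mem_biUnion.1 hc
    exact he (hAE t ht hat)
  have hxi : ∀ e ∈ Ei E i, x e = ξ e := by
    intro e he
    have ht : Sum.inl e ∈ T := (hmemT _).2 (Or.inl ⟨e, he, rfl⟩)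
    have := hxtot _ ht
    simpa [hA, hy] using this
  have hxk : ∀ k, k ≠ i → vsum x (Ei E k) = u k := by
    intro k hk
    have ht : Sum.inr k ∈ T := (hmemT _).2 (Or.inr ⟨k, Finset.mem_erase.2
      ⟨hk, Finset.mem_univ k⟩, rfl⟩)
    have := hxtot _ ht
    simpa [hA, hy, vsum] using this
  have hxEi : vsum x (Ei E i) = vsum ξ (Ei E i) :=
    Finset.sum_congr rfl fun e he => hxi e he
  refine ⟨x, ⟨hx0, hxE, memP_of_le_fw hfj hw hx0 hxE fun F hF => hxcap F hF, ?_⟩, hxi, hxk⟩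
  intro k
  by_cases hk : k = i
  · rw [hk, hxEi]
    exact hξd
  · rw [hxk k hk]
    exact hud k hk


/- ---------- more P_{w,d} lemmas ---------- -/

lemma EX_empty' (E : Finset (B × S)) : EX E (∅ : Finset B) = ∅ := by
  ext e; simp [mem_EX]

lemma memPwd_of_le {E : Finset (B × S)} {fj : S → Finset (B × S) → ℝ} {w : B × S → ℝ}
    {d : B → ℝ} {x z : B × S → ℝ} (hw0 : ∀ e, 0 ≤ w e) (hz : memPwd E fj w d z)
    (hx0 : ∀ e, 0 ≤ x e) (hle : ∀ e, x e ≤ z e) : memPwd E fj w d x := by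
  obtain ⟨hz0, hzs, ⟨hP0, hPs, hPc⟩, hzd⟩ := hz
  have hxs : ∀ e ∉ E, x e = 0 :=
    fun e he => le_antisymm ((hle e).trans (le_of_eq (hzs e he))) (hx0 e)
  refine ⟨hx0, hxs, ⟨fun e => add_nonneg (hw0 e) (hx0 e), ?_, ?_⟩, ?_⟩
  · intro e he
    show w e + x e = 0
    have := hPs e he
    have hze : z e = 0 := hzs e he
    rw [hxs e he, add_zero]
    have : w e + z e = 0 := hPs e he
    rw [hze, add_zero] at this
    exact this
  · intro j F hF
    calc vsum (w + x) F ≤ vsum (w + z) F :=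
          vsum_le_vsum (fun e => by simp only [Pi.add_apply]; linarith [hle e]) F
      _ ≤ fj j F := hPc j F hF
  · intro k
    exact (vsum_le_vsum hle (Ei E k)).trans (hzd k)

lemma exists_memPwd_max {E : Finset (B × S)} {fj : S → Finset (B × S) → ℝ} {w : B × S → ℝ}
    {d : B → ℝ} (hfj : ∀ j : S, IsMonoSubmodular (Ej E j) (fj j)) (hw : memP E fj w)
    (hd : ∀ k, 0 ≤ d k) (G : Finset (B × S)) :
    ∃ x, memPwd E fj w d x ∧ ∀ z, memPwd E fj w d z → vsum z G ≤ vsum x G := by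
  classical
  set K : Set (B × S → ℝ) := {x | memPwd E fj w d x} with hK
  have hne : K.Nonempty := ⟨0, memPwd_zero hw hd⟩
  have hcl : IsClosed K := by
    have : K = (⋂ e : B × S, {x : B × S → ℝ | 0 ≤ x e}) ∩
        ((⋂ e ∈ {e : B × S | e ∉ E}, {x : B × S → ℝ | x e = 0}) ∩
          ((⋂ j : S, ⋂ F ∈ {F : Finset (B × S) | F ⊆ Ej E j},
              {x : B × S → ℝ | vsum (w + x) F ≤ fj j F}) ∩
            ⋂ k : B, {x : B × S → ℝ | vsum x (Ei E k) ≤ d k})) := by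
      ext x
      simp only [hK, Set.mem_setOf_eq, Set.mem_inter_iff, Set.mem_iInter, memPwd, memP]
      constructor
      · rintro ⟨h1, h2, ⟨_, _, h3⟩, h4⟩
        exact ⟨h1, fun e he => h2 e he, ⟨fun j F hF => h3 j F hF, h4⟩⟩
      · rintro ⟨h1, ⟨h2, ⟨h3, h4⟩⟩⟩
        refine ⟨h1, fun e he => h2 e he, ⟨fun e => add_nonneg (hw.1 e) (h1 e), ?_, ?_⟩, h4⟩
        · intro e he
          show w e + x e = 0
          rw [hw.2.1 e he, h2 e he, add_zero]
        · exact fun j F hF => h3 j F hF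
    rw [this]
    refine (isClosed_iInter fun e => isClosed_le continuous_const (continuous_apply e)).inter
      (IsClosed.inter ?_ (IsClosed.inter ?_ ?_))
    · exact isClosed_biInter fun e _ => isClosed_eq (continuous_apply e) continuous_const
    · refine isClosed_iInter fun j => isClosed_biInter fun F _ => ?_
      have : Continuous fun x : B × S → ℝ => vsum (w + x) F :=
        continuous_finset_sum F fun e _ => (continuous_const.add (continuous_apply e))
      exact isClosed_le this continuous_const
    · exact isClosed_iInter fun k =>
        isClosed_le (continuous_finset_sum _ fun e _ => continuous_apply e) continuous_const
  set C : ℝ := ∑ e ∈ E, max (fw E fj w {e}) 0 with hC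
  have hC0 : 0 ≤ C := Finset.sum_nonneg fun e _ => le_max_right _ _
  have hbd : ∀ x ∈ K, ∀ e, x e ∈ Set.Icc (0 : ℝ) C := by
    intro x hx e
    refine ⟨hx.1 e, ?_⟩
    by_cases he : e ∈ E
    · have h1 : x e ≤ fw E fj w {e} := by
        have := vsum_le_fw hx.2.2.1 hx.1 (Finset.singleton_subset_iff.2 he)
        simpa [vsum] using this
      have h2 : max (fw E fj w {e}) 0 ≤ C :=
        Finset.single_le_sum (fun e' _ => le_max_right (fw E fj w {e'}) 0) he
      exact h1.trans ((le_max_left _ _).trans h2)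
    · rw [hx.2.1 e he]; exact hC0
  obtain ⟨x, hxK, hmax⟩ := exists_maxOn' K hne hcl C hbd G
  exact ⟨x, hxK, hmax⟩

lemma fwd_eq_max {E : Finset (B × S)} {fj : S → Finset (B × S) → ℝ} {w x : B × S → ℝ}
    {d : B → ℝ} (hw : memP E fj w) (hd : ∀ k, 0 ≤ d k) {G : Finset (B × S)} (hG : G ⊆ E)
    (hx : memPwd E fj w d x) (hmax : ∀ z, memPwd E fj w d z → vsum z G ≤ vsum x G) :
    fwd E fj w d G = vsum x G :=
  le_antisymm (fwd_le hw hd hmax) (le_fwd hx hG)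



/-- `ξ` belongs to the clinching polytope `P^i_{w,d}` iff
`ξ(F) ≤ f_{w,d}(E_X ∪ F) - f_{w,d}(E_X)` for all `F ⊆ E_i` and `X ⊆ N - i`. -/
theorem mem_clinchP_iff
    (E : Finset (B × S)) (fj : S → Finset (B × S) → ℝ)
    (hfj : ∀ j : S, IsMonoSubmodular (Ej E j) (fj j))
    (w : B × S → ℝ) (hw : memP E fj w)
    (d : B → ℝ) (hd : ∀ i : B, 0 ≤ d i)
    (i : B) (ξ : B × S → ℝ) (hξ0 : ∀ e, 0 ≤ ξ e) (hξs : ∀ e ∉ Ei E i, ξ e = 0) :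
    ξ ∈ ClinchP E fj w d i ↔
      ∀ F ⊆ Ei E i, ∀ X ⊆ Finset.univ.erase i,
        vsum ξ F ≤ fwd E fj w d (EX E X ∪ F) - fwd E fj w d (EX E X) := by
  classical
  have hdisjEX : ∀ {X : Finset B}, X ⊆ Finset.univ.erase i → ∀ {F : Finset (B × S)},
      F ⊆ Ei E i → Disjoint (EX E X) F := by
    intro X hX F hF
    rw [Finset.disjoint_left]
    intro e heX heF
    have h1 : e.1 ∈ X := (mem_EX.1 heX).2
    have h2 : e.1 = i := (mem_Ei.1 (hF heF)).2
    exact Finset.ne_of_mem_erase (hX h1) h2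
  constructor
  · -- forward direction
    rintro ⟨-, -, hPi⟩ F hF X hX
    obtain ⟨xm, hxm, hxmax⟩ := exists_memPwd_max hfj hw hd (EX E X)
    set xb : B × S → ℝ := fun e => if e ∈ Ei E i then 0 else xm e with hxb
    have hxb0 : ∀ e, 0 ≤ xb e := by
      intro e
      rw [hxb]
      dsimp only
      split
      · exact le_refl 0
      · exact hxm.1 e
    have hxble : ∀ e, xb e ≤ xm e := by
      intro e
      rw [hxb]
      dsimp only
      split
      · exact hxm.1 e
      · exact le_refl _
    have hxbm : memPwd E fj w d xb := memPwd_of_le hw.1 hxm hxb0 hxble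
    set u : B → ℝ := fun k => if k = i then 0 else vsum xb (Ei E k) with hu
    have huPi0 : u ∈ PiWd E fj w d i 0 := by
      refine ⟨if_pos rfl, ?_, xb, hxbm, ?_, ?_⟩
      · intro k
        rw [hu]
        dsimp only
        split
        · exact le_refl 0
        · exact vsum_nonneg hxb0 _
      · intro e he
        show xb e = (0 : B × S → ℝ) e
        rw [hxb]
        dsimp only
        rw [if_pos he, Pi.zero_apply]
      · intro k hk
        rw [hu]
        dsimp only
        rw [if_neg hk]
    rw [← hPi] at huPi0
    obtain ⟨-, -, x', hx', hx'ξ, hx'k⟩ := huPi0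
    have hXE : EX E X ⊆ E := EX_subset E X
    have hFE : F ⊆ E := hF.trans (Ei_subset E i)
    have hcomp1 : vsum x' (EX E X ∪ F) = vsum x' (EX E X) + vsum x' F :=
      Finset.sum_union (hdisjEX hX hF)
    have hcomp2 : vsum x' F = vsum ξ F :=
      Finset.sum_congr rfl fun e he => hx'ξ e (hF he)
    have hcomp3 : vsum x' (EX E X) = vsum xm (EX E X) := by
      rw [vsum_EX, vsum_EX]
      apply Finset.sum_congr rfl
      intro k hk
      have hki : k ≠ i := Finset.ne_of_mem_erase (hX hk)
      rw [hx'k k hki, hu]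
      dsimp only
      rw [if_neg hki]
      apply Finset.sum_congr rfl
      intro e he
      rw [hxb]
      dsimp only
      rw [if_neg]
      intro hc
      exact hki ((mem_Ei.1 hc).2 ▸ (mem_Ei.1 he).2 ▸ rfl)
    have hup : vsum x' (EX E X ∪ F) ≤ fwd E fj w d (EX E X ∪ F) :=
      le_fwd hx' (Finset.union_subset hXE hFE)
    have hlow : fwd E fj w d (EX E X) = vsum xm (EX E X) :=
      fwd_eq_max hw hd hXE hxm hxmax
    rw [hcomp1, hcomp2, hcomp3] at hup
    rw [hlow]
    linarith
  · -- backward direction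
    intro hineq
    refine ⟨hξ0, hξs, Set.Subset.antisymm ?_ ?_⟩
    · -- PiWd ξ ⊆ PiWd 0 : zero out on E_i
      rintro uu ⟨hui, huu0, x, hx, hxξ, hxk⟩
      set xb : B × S → ℝ := fun e => if e ∈ Ei E i then 0 else x e with hxb
      have hxb0 : ∀ e, 0 ≤ xb e := by
        intro e
        rw [hxb]; dsimp only; split
        · exact le_refl 0
        · exact hx.1 e
      have hxble : ∀ e, xb e ≤ x e := by
        intro e
        rw [hxb]; dsimp only; split
        · exact hx.1 e
        · exact le_refl _
      refine ⟨hui, huu0, xb, memPwd_of_le hw.1 hx hxb0 hxble, ?_, ?_⟩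
      · intro e he
        show xb e = (0 : B × S → ℝ) e
        rw [hxb]; dsimp only
        rw [if_pos he, Pi.zero_apply]
      · intro k hk
        rw [← hxk k hk]
        apply Finset.sum_congr rfl
        intro e he
        rw [hxb]; dsimp only
        rw [if_neg]
        intro hc
        exact hk ((mem_Ei.1 he).2 ▸ (mem_Ei.1 hc).2 ▸ rfl)
    · -- PiWd 0 ⊆ PiWd ξ : the key existence lemma
      rintro uu ⟨hui, huu0, x0, hx0, hx0z, hx0k⟩
      have hud : ∀ k, k ≠ i → uu k ≤ d k := by
        intro k hk
        rw [← hx0k k hk]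
        exact hx0.2.2.2 k
      have hξd : vsum ξ (Ei E i) ≤ d i := by
        have h1 := hineq (Ei E i) (Finset.Subset.refl _) ∅ (Finset.empty_subset _)
        rw [EX_empty', Finset.empty_union, fwd_empty hw hd] at h1
        have h2 : fwd E fj w d (Ei E i) ≤ d i :=
          fwd_le hw hd fun z hz => hz.2.2.2 i
        linarith
      have hcut : ∀ D ⊆ Ei E i, ∀ Y ⊆ Finset.univ.erase i,
          vsum ξ D + ∑ k ∈ Y, uu k ≤ fw E fj w (EX E Y ∪ D) := by
        intro D hD Y hY
        have h1 : ∑ k ∈ Y, uu k = vsum x0 (EX E Y) := by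
          rw [vsum_EX]
          exact Finset.sum_congr rfl fun k hk =>
            (hx0k k (Finset.ne_of_mem_erase (hY hk))).symm
        have h2 : vsum x0 (EX E Y) ≤ fwd E fj w d (EX E Y) := le_fwd hx0 (EX_subset E Y)
        have h3 := hineq D hD Y hY
        have h4 : fwd E fj w d (EX E Y ∪ D) ≤ fw E fj w (EX E Y ∪ D) :=
          fwd_le_fw hw hd (Finset.union_subset (EX_subset E Y) (hD.trans (Ei_subset E i)))
        rw [h1]
        linarith
      obtain ⟨x, hxm, hxξ, hxk⟩ := key_exists E fj hfj w hw d i ξ hξ0 uu huu0 hud hξd hcut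
      exact ⟨hui, huu0, x, hxm, hxξ, fun k hk => hxk k hk⟩


end TwoSidedMarket
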